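/- Let H be an atomic monoid. Then c(H) = sup{ c(a) : a ∈ H, A_a(M_H) ≠ ∅ }: the catenary degree of H is already attained as the supremum of catenary degrees over those elements a supporting an atom of the monoid of relations. -/

import Mathlib

open Multiset
open scoped Classical ENNReal

/-- The set of atoms (irreducible elements) of a reduced monoid `M`. -/
abbrev Atom (M : Type) [CancelCommMonoid M] : Type := {u : M // Irreducible u}

/-- The factorization homomorphism `π : Z(H) → H`, where the factorization monoid
`Z(H)` is realized as the free commutative monoid (multiset) over the atoms. -/
def fprod {M : Type} [CancelCommMonoid M] (z : Multiset (Atom M)) : M :=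
  (z.map Subtype.val).prod

/-- The set of factorizations `Z(a)` of `a`. -/
def Zf {M : Type} [CancelCommMonoid M] (a : M) : Set (Multiset (Atom M)) :=
  {z | fprod z = a}

/-- `M` is reduced: the only unit is `1`. -/
def Reduced (M : Type) [CancelCommMonoid M] : Prop := ∀ u : M, IsUnit u → u = 1

/-- `M` is atomic: every non-unit is a product of atoms. -/
def Atomic (M : Type) [CancelCommMonoid M] : Prop :=
  ∀ a : M, ¬ IsUnit a → ∃ z : Multiset (Atom M), fprod z = a

/-- The distance between two factorizations. -/
noncomputable def fdist {M : Type} [CancelCommMonoid M] (z z' : Multiset (Atom M)) : ℕ :=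
  max (card (z - z')) (card (z' - z))

/-- The catenary degree `c(a)`: the least `N` such that any two factorizations of `a`
can be concatenated by an `N`-chain of factorizations of `a`. -/
noncomputable def cat {M : Type} [CancelCommMonoid M] (a : M) : ℕ∞ :=
  sInf {N : ℕ∞ | ∀ z ∈ Zf a, ∀ z' ∈ Zf a,
    Relation.ReflTransGen (fun u v => v ∈ Zf a ∧ (fdist u v : ℕ∞) ≤ N) z z'}

/-- The catenary degree `c(H)`. -/
noncomputable def catH (M : Type) [CancelCommMonoid M] : ℕ∞ := ⨆ a : M, cat a

/-- The `R`-relation on factorizations of `a`: two factorizations are `R`-related if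
they can be joined by a chain of factorizations of `a` whose consecutive members have a
common atom (the degenerate case `z = z' = 1` is the reflexivity case). -/
def RRel {M : Type} [CancelCommMonoid M] (a : M) :
    Multiset (Atom M) → Multiset (Atom M) → Prop :=
  Relation.ReflTransGen (fun u v => u ∈ Zf a ∧ v ∈ Zf a ∧ u ∩ v ≠ 0)

/-- `|R_a| ≥ 2`: `a` has at least two `R`-equivalence classes of factorizations. -/
def TwoClasses {M : Type} [CancelCommMonoid M] (a : M) : Prop :=
  ∃ z ∈ Zf a, ∃ z' ∈ Zf a, ¬ RRel a z z'

/-- `μ(a)`: the supremum over the `R`-classes `ρ` of `Z(a)` of `min {|z| : z ∈ ρ}`. -/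
noncomputable def mu {M : Type} [CancelCommMonoid M] (a : M) : ℕ∞ :=
  ⨆ z ∈ Zf a, ⨅ w ∈ {w | w ∈ Zf a ∧ RRel a z w}, (card w : ℕ∞)

/-- `μ(H) = sup {μ(a) : a ∈ H, |R_a| ≥ 2}`. -/
noncomputable def muH (M : Type) [CancelCommMonoid M] : ℕ∞ :=
  ⨆ a : M, ⨆ (_ : TwoClasses a), mu a

/-- The monoid of relations `M_H ⊆ Z(H) × Z(H)`. -/
def MHset (M : Type) [CancelCommMonoid M] :
    Set (Multiset (Atom M) × Multiset (Atom M)) :=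
  {p | fprod p.1 = fprod p.2}

/-- Atoms of the (reduced) monoid of relations `M_H`. -/
def IsRelAtom {M : Type} [CancelCommMonoid M]
    (p : Multiset (Atom M) × Multiset (Atom M)) : Prop :=
  p ∈ MHset M ∧ p ≠ 0 ∧
    ∀ q r, q ∈ MHset M → r ∈ MHset M → p = q + r → q = 0 ∨ r = 0

/-- `A_a(M_H) ≠ ∅`: there is an atom of `M_H` over `a`. -/
def HasRelAtom {M : Type} [CancelCommMonoid M] (a : M) : Prop :=
  ∃ p : Multiset (Atom M) × Multiset (Atom M), IsRelAtom p ∧ fprod p.1 = a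
section AuxProof

variable {M : Type} [CancelCommMonoid M]

lemma fprod_add' (z w : Multiset (Atom M)) : fprod (z + w) = fprod z * fprod w := by
  simp [fprod]

lemma eq_zero_of_fprod_eq_one' (hred : Reduced M) {z : Multiset (Atom M)}
    (h : fprod z = 1) : z = 0 := by
  by_contra hz
  obtain ⟨u, hu⟩ := Multiset.exists_mem_of_ne_zero hz
  have hd : u.val ∣ fprod z := Multiset.dvd_prod (Multiset.mem_map_of_mem _ hu)
  rw [h] at hd
  exact u.2.not_isUnit (isUnit_of_dvd_one hd)

lemma fst_ne_zero' (hred : Reduced M) {q : Multiset (Atom M) × Multiset (Atom M)}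
    (hq : q ∈ MHset M) (h0 : q ≠ 0) : q.1 ≠ 0 := by
  intro h1
  have hq' : fprod q.1 = fprod q.2 := hq
  rw [h1] at hq'
  have h2 : q.2 = 0 := eq_zero_of_fprod_eq_one' hred (by simpa [fprod] using hq'.symm)
  exact h0 (Prod.ext h1 h2)

lemma exists_relAtom_list (hred : Reduced M) :
    ∀ n (p : Multiset (Atom M) × Multiset (Atom M)),
      Multiset.card p.1 + Multiset.card p.2 = n → p ∈ MHset M →
      ∃ L : List (Multiset (Atom M) × Multiset (Atom M)),
        (∀ q ∈ L, IsRelAtom q) ∧ L.sum = p := by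
  intro n
  induction n using Nat.strong_induction_on with
  | _ n ih =>
    intro p hn hp
    by_cases h0 : p = 0
    · exact ⟨[], by simp, by simp [h0]⟩
    by_cases hatm : IsRelAtom p
    · exact ⟨[p], by simp [hatm], by simp⟩
    · have h : ¬ ∀ q r, q ∈ MHset M → r ∈ MHset M → p = q + r → q = 0 ∨ r = 0 := by
        intro h; exact hatm ⟨hp, h0, h⟩
      push_neg at h
      obtain ⟨q, r, hq, hr, hpqr, hq0, hr0⟩ := h
      have e1 : Multiset.card p.1 = Multiset.card q.1 + Multiset.card r.1 := by
        rw [hpqr]; simp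
      have e2 : Multiset.card p.2 = Multiset.card q.2 + Multiset.card r.2 := by
        rw [hpqr]; simp
      have hq1 : 0 < Multiset.card q.1 := Multiset.card_pos.2 (fst_ne_zero' hred hq hq0)
      have hr1 : 0 < Multiset.card r.1 := Multiset.card_pos.2 (fst_ne_zero' hred hr hr0)
      obtain ⟨Lq, hLq, hLqs⟩ := ih (Multiset.card q.1 + Multiset.card q.2) (by omega) q rfl hq
      obtain ⟨Lr, hLr, hLrs⟩ := ih (Multiset.card r.1 + Multiset.card r.2) (by omega) r rfl hr
      refine ⟨Lq ++ Lr, ?_, ?_⟩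
      · intro x hx
        rcases List.mem_append.1 hx with h | h
        exacts [hLq x h, hLr x h]
      · rw [List.sum_append, hLqs, hLrs, hpqr]

lemma cat_spec (b : M) : ∀ z ∈ Zf b, ∀ z' ∈ Zf b,
    Relation.ReflTransGen (fun u v => v ∈ Zf b ∧ (fdist u v : ℕ∞) ≤ cat b) z z' := by
  have hne : {N : ℕ∞ | ∀ z ∈ Zf b, ∀ z' ∈ Zf b,
      Relation.ReflTransGen (fun u v => v ∈ Zf b ∧ (fdist u v : ℕ∞) ≤ N) z z'}.Nonempty :=
    ⟨⊤, fun z _ z' hz' => Relation.ReflTransGen.single ⟨hz', le_top⟩⟩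
  exact csInf_mem hne

lemma fdist_add_left' (c w v : Multiset (Atom M)) : fdist (c + w) (c + v) = fdist w v := by
  have h1 : (c + w) - (c + v) = w - v := by
    ext x; simp [Multiset.count_sub]; omega
  have h2 : (c + v) - (c + w) = v - w := by
    ext x; simp [Multiset.count_sub]; omega
  simp [fdist, h1, h2]

lemma chain_step' (NN : ℕ∞) {a b : M} {c x y : Multiset (Atom M)}
    (hx : fprod x = b) (hy : fprod y = b) (ha : fprod (c + x) = a) (hbN : cat b ≤ NN) :
    Relation.ReflTransGen (fun u v => v ∈ Zf a ∧ (fdist u v : ℕ∞) ≤ NN) (c + x) (c + y) := by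
  have base := cat_spec b x hx y hy
  refine Relation.ReflTransGen.lift (fun t => c + t) ?_ _ _ base
  rintro w v ⟨hv, hd⟩
  have hv' : fprod v = b := hv
  constructor
  · show fprod (c + v) = a
    rw [fprod_add', hv']
    rw [fprod_add', hx] at ha
    exact ha
  · rw [fdist_add_left']
    exact hd.trans hbN

lemma chain_list' (NN : ℕ∞) (hN : ∀ b : M, HasRelAtom b → cat b ≤ NN) {a : M} :
    ∀ L : List (Multiset (Atom M) × Multiset (Atom M)), ∀ u : Multiset (Atom M),
      (∀ q ∈ L, IsRelAtom q) → fprod (u + L.sum.1) = a →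
      Relation.ReflTransGen (fun w v => v ∈ Zf a ∧ (fdist w v : ℕ∞) ≤ NN)
        (u + L.sum.1) (u + L.sum.2) := by
  intro L
  induction L with
  | nil =>
    intro u _ _
    simp only [List.sum_nil, Prod.fst_zero, Prod.snd_zero, add_zero]
    exact Relation.ReflTransGen.refl
  | cons q L ih =>
    intro u hq ha
    have hsum1 : (q :: L).sum.1 = q.1 + L.sum.1 := by simp
    have hsum2 : (q :: L).sum.2 = q.2 + L.sum.2 := by simp
    have e1 : u + (q :: L).sum.1 = (u + L.sum.1) + q.1 := by rw [hsum1]; abel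
    have e2 : (u + L.sum.1) + q.2 = (u + q.2) + L.sum.1 := by abel
    have e3 : u + (q :: L).sum.2 = (u + q.2) + L.sum.2 := by rw [hsum2]; abel
    rw [e1, e3]
    have hA : IsRelAtom q := hq q List.mem_cons_self
    have hmem : fprod q.1 = fprod q.2 := hA.1
    have hcat : cat (fprod q.1) ≤ NN := hN _ ⟨q, hA, rfl⟩
    have ha' : fprod ((u + L.sum.1) + q.1) = a := by rw [← e1]; exact ha
    have step1 := chain_step' NN rfl hmem.symm ha' hcat
    have ha'' : fprod ((u + q.2) + L.sum.1) = a := by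
      rw [← e2, fprod_add', ← hmem, ← fprod_add']
      exact ha'
    have step2 := ih (u + q.2) (fun x hx => hq x (List.mem_cons_of_mem q hx)) ha''
    refine Relation.ReflTransGen.trans step1 ?_
    rw [e2]
    exact step2

end AuxProof

/-- **Theorem 4.8.** `c(H) = sup {c(a) : a ∈ H, A_a(M_H) ≠ ∅}`. -/
theorem cat_eq_sup_hasRelAtom (M : Type) [CancelCommMonoid M]
    (hred : Reduced M) (hat : Atomic M) :
    catH M = ⨆ a : M, ⨆ (_ : HasRelAtom a), cat a := by
  apply le_antisymm
  · rw [catH]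
    refine iSup_le fun a => ?_
    rw [cat]
    refine sInf_le ?_
    simp only [Set.mem_setOf_eq]
    intro z hz z' hz'
    have hz1 : fprod z = a := hz
    have hz1' : fprod z' = a := hz'
    have hp : ((z, z') : Multiset (Atom M) × Multiset (Atom M)) ∈ MHset M := by
      show fprod z = fprod z'
      rw [hz1, hz1']
    obtain ⟨L, hL, hLs⟩ := exists_relAtom_list hred _ (z, z') rfl hp
    have h1 : L.sum.1 = z := by rw [hLs]
    have h2 : L.sum.2 = z' := by rw [hLs]
    have hNle : ∀ b : M, HasRelAtom b → cat b ≤ ⨆ a : M, ⨆ (_ : HasRelAtom a), cat a :=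
      fun b hb => le_iSup₂ (f := fun a (_ : HasRelAtom a) => cat a) b hb
    have := chain_list' (a := a) _ hNle L 0 hL (by rw [zero_add, h1]; exact hz1)
    rw [zero_add, zero_add, h1, h2] at this
    exact this
  · exact iSup_le fun a => iSup_le fun _ => le_iSup (fun a => cat a) a
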